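/- Under the same assumptions, ζ̃ : H → A >⋊ H is an algebra homomorphism: ζ̃(1_H) = 1 and ζ̃(g g') = ζ̃(g) ζ̃(g') for all g, g' ∈ H. -/

import Mathlib

open TensorProduct

section Conv
variable {k C X : Type} [CommRing k] [AddCommGroup C] [Module k C] [Coalgebra k C]
  [Ring X] [Algebra k X]

/-- Convolution product on linear maps from a coalgebra to an algebra. -/
noncomputable def conv (p q : C →ₗ[k] X) : C →ₗ[k] X :=
  LinearMap.mul' k X ∘ₗ TensorProduct.map p q ∘ₗ Coalgebra.comul

/-- Convolution unit. -/
noncomputable def cunit : C →ₗ[k] X := Algebra.linearMap k X ∘ₗ Coalgebra.counit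

lemma cunit_apply (c : C) : (cunit (k := k) (X := X)) c = algebraMap k X (Coalgebra.counit c) := rfl

lemma conv_repr (p q : C →ₗ[k] X) (c : C) (r : Coalgebra.Repr k c (C × C)) :
    conv p q c = ∑ i ∈ r.index, p (r.left i) * q (r.right i) := by
  simp [conv, ← r.eq, map_sum, LinearMap.mul'_apply]

lemma conv_cunit_left (p : C →ₗ[k] X) : conv cunit p = p := by
  ext c
  set r := Coalgebra.Repr.arbitrary k c
  rw [conv_repr _ _ c r]
  have h := Coalgebra.sum_counit_tmul_map_eq (R := k) p c (repr := r)
  have h2 := congrArg (TensorProduct.lid k X) h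
  simp only [map_sum, TensorProduct.lid_tmul, one_smul] at h2
  calc ∑ i ∈ r.index, cunit (r.left i) * p (r.right i)
      = ∑ i ∈ r.index, Coalgebra.counit (R := k) (r.left i) • p (r.right i) := by
        refine Finset.sum_congr rfl fun i _ => ?_
        rw [cunit_apply, Algebra.smul_def]
    _ = p c := h2

lemma conv_cunit_right (p : C →ₗ[k] X) : conv p cunit = p := by
  ext c
  set r := Coalgebra.Repr.arbitrary k c
  rw [conv_repr _ _ c r]
  have h := Coalgebra.sum_map_tmul_counit_eq (R := k) p c (repr := r)
  have h2 := congrArg (TensorProduct.rid k X) h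
  simp only [map_sum, TensorProduct.rid_tmul, one_smul] at h2
  calc ∑ i ∈ r.index, p (r.left i) * cunit (r.right i)
      = ∑ i ∈ r.index, Coalgebra.counit (R := k) (r.right i) • p (r.left i) := by
        refine Finset.sum_congr rfl fun i _ => ?_
        rw [cunit_apply, ← Algebra.commutes, ← Algebra.smul_def]
    _ = p c := h2

lemma conv_assoc (p q s : C →ₗ[k] X) : conv (conv p q) s = conv p (conv q s) := by
  ext c
  set r := Coalgebra.Repr.arbitrary k c with hr
  set a₁ : (i : C × C) → Coalgebra.Repr k (r.left i) (C × C) := fun i => Coalgebra.Repr.arbitrary k _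
  set a₂ : (i : C × C) → Coalgebra.Repr k (r.right i) (C × C) := fun i => Coalgebra.Repr.arbitrary k _
  have key := Coalgebra.sum_tmul_tmul_eq r a₁ a₂
  have key2 := congrArg (LinearMap.mul' k X ∘ₗ
    TensorProduct.map p (LinearMap.mul' k X ∘ₗ TensorProduct.map q s)) key
  simp only [map_sum, LinearMap.coe_comp, Function.comp_apply, TensorProduct.map_tmul,
    LinearMap.mul'_apply] at key2
  rw [conv_repr _ _ c r, conv_repr _ _ c r]
  calc ∑ i ∈ r.index, conv p q (r.left i) * s (r.right i)
      = ∑ i ∈ r.index, ∑ j ∈ (a₁ i).index,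
          p ((a₁ i).left j) * (q ((a₁ i).right j) * s (r.right i)) := by
        refine Finset.sum_congr rfl fun i _ => ?_
        rw [conv_repr _ _ _ (a₁ i), Finset.sum_mul]
        exact Finset.sum_congr rfl fun j _ => by rw [mul_assoc]
    _ = ∑ i ∈ r.index, ∑ j ∈ (a₂ i).index,
          p (r.left i) * (q ((a₂ i).left j) * s ((a₂ i).right j)) := key2
    _ = ∑ i ∈ r.index, p (r.left i) * conv q s (r.right i) := by
        refine Finset.sum_congr rfl fun i _ => ?_
        rw [conv_repr _ _ _ (a₂ i), Finset.mul_sum]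

lemma conv_mulLeft (x : X) (p q : C →ₗ[k] X) :
    conv (LinearMap.mulLeft k x ∘ₗ p) q = LinearMap.mulLeft k x ∘ₗ conv p q := by
  ext c
  set r := Coalgebra.Repr.arbitrary k c
  rw [LinearMap.comp_apply, LinearMap.mulLeft_apply, conv_repr _ _ c r, conv_repr _ _ c r,
    Finset.mul_sum]
  exact Finset.sum_congr rfl fun i _ => by
    rw [LinearMap.comp_apply, LinearMap.mulLeft_apply, mul_assoc]

lemma conv_mulRight (x : X) (p q : C →ₗ[k] X) :
    conv p (LinearMap.mulRight k x ∘ₗ q) = LinearMap.mulRight k x ∘ₗ conv p q := by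
  ext c
  set r := Coalgebra.Repr.arbitrary k c
  rw [LinearMap.comp_apply, LinearMap.mulRight_apply, conv_repr _ _ c r, conv_repr _ _ c r,
    Finset.sum_mul]
  exact Finset.sum_congr rfl fun i _ => by
    rw [LinearMap.comp_apply, LinearMap.mulRight_apply, mul_assoc]

lemma conv_inv_unique {x y z : C →ₗ[k] X} (h1 : conv x y = cunit) (h2 : conv z x = cunit) :
    y = z := by
  calc y = conv cunit y := (conv_cunit_left y).symm
    _ = conv (conv z x) y := by rw [h2]
    _ = conv z (conv x y) := conv_assoc z x y
    _ = conv z cunit := by rw [h1]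
    _ = z := conv_cunit_right z

end Conv

section Anti
variable {k H : Type} [CommRing k] [Ring H] [HopfAlgebra k H]

open Coalgebra HopfAlgebra

lemma comul_tmul' (g g' : H) :
    Coalgebra.comul (R := k) (g ⊗ₜ[k] g') =
      TensorProduct.tensorTensorTensorComm k H H H H
        (Coalgebra.comul g ⊗ₜ Coalgebra.comul g') := rfl

lemma counit_tmul' (g g' : H) :
    Coalgebra.counit (R := k) (g ⊗ₜ[k] g') = Coalgebra.counit g * Coalgebra.counit g' := by
  simp [CoalgebraStruct.counit, LinearMap.mul'_apply, mul_comm]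

lemma conv_tmul (p q : H ⊗[k] H →ₗ[k] H) (g g' : H) (r : Coalgebra.Repr k g (H × H))
    (r' : Coalgebra.Repr k g' (H × H)) :
    conv p q (g ⊗ₜ[k] g') = ∑ i ∈ r.index, ∑ j ∈ r'.index,
      p (r.left i ⊗ₜ r'.left j) * q (r.right i ⊗ₜ r'.right j) := by
  rw [conv, LinearMap.comp_apply, LinearMap.comp_apply, comul_tmul', ← r.eq, ← r'.eq]
  rw [TensorProduct.sum_tmul]
  simp only [TensorProduct.tmul_sum, map_sum, TensorProduct.tensorTensorTensorComm_tmul,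
    TensorProduct.map_tmul, LinearMap.mul'_apply]

lemma antipode_one' : antipode (R := k) (1 : H) = 1 := by
  have := HopfAlgebra.mul_antipode_rTensor_comul_apply (R := k) (1 : H)
  rw [Bialgebra.comul_one, Algebra.TensorProduct.one_def] at this
  simpa using this

lemma antipode_anti_mul (g g' : H) :
    antipode (R := k) (g * g') = antipode (R := k) g' * antipode (R := k) g := by
  set m : H ⊗[k] H →ₗ[k] H := LinearMap.mul' k H
  set y : H ⊗[k] H →ₗ[k] H := antipode (R := k) ∘ₗ m
  set z : H ⊗[k] H →ₗ[k] H :=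
    m ∘ₗ TensorProduct.map (antipode (R := k)) (antipode (R := k)) ∘ₗ
      (TensorProduct.comm k H H).toLinearMap
  have h1 : conv m y = cunit := by
    apply TensorProduct.ext'
    intro a b
    set r := Coalgebra.Repr.arbitrary k a
    set r' := Coalgebra.Repr.arbitrary k b
    rw [conv_tmul m y a b r r']
    have hX : ∑ i ∈ r.index, ∑ j ∈ r'.index,
        (r.left i * r'.left j) ⊗ₜ[k] (r.right i * r'.right j)
          = Coalgebra.comul (R := k) (a * b) := by
      rw [Bialgebra.comul_mul, ← r.eq, ← r'.eq, Finset.sum_mul_sum]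
      simp [Algebra.TensorProduct.tmul_mul_tmul]
    have key := congrArg (LinearMap.mul' k H ∘ₗ LinearMap.lTensor H (antipode (R := k))) hX
    simp only [map_sum, LinearMap.coe_comp, Function.comp_apply, LinearMap.lTensor_tmul,
      LinearMap.mul'_apply] at key
    rw [HopfAlgebra.mul_antipode_lTensor_comul_apply] at key
    calc ∑ i ∈ r.index, ∑ j ∈ r'.index,
          m (r.left i ⊗ₜ r'.left j) * y (r.right i ⊗ₜ r'.right j)
        = ∑ i ∈ r.index, ∑ j ∈ r'.index,
            (r.left i * r'.left j) * antipode (R := k) (r.right i * r'.right j) := by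
          simp [m, y, LinearMap.mul'_apply]
      _ = algebraMap k H (Coalgebra.counit (R := k) (a * b)) := key
      _ = cunit (a ⊗ₜ[k] b) := by
          rw [Bialgebra.counit_mul]
          rw [show cunit (k := k) (X := H) (a ⊗ₜ[k] b)
              = algebraMap k H (Coalgebra.counit (R := k) (a ⊗ₜ[k] b)) from rfl, counit_tmul']
  have h2 : conv z m = cunit := by
    apply TensorProduct.ext'
    intro a b
    set r := Coalgebra.Repr.arbitrary k a
    set r' := Coalgebra.Repr.arbitrary k b
    rw [conv_tmul z m a b r r']
    have inner : ∀ j, ∑ i ∈ r.index,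
        z (r.left i ⊗ₜ r'.left j) * m (r.right i ⊗ₜ r'.right j)
        = antipode (R := k) (r'.left j) * algebraMap k H (Coalgebra.counit (R := k) a)
            * r'.right j := by
      intro j
      have : ∀ i, z (r.left i ⊗ₜ[k] r'.left j) * m (r.right i ⊗ₜ[k] r'.right j)
          = antipode (R := k) (r'.left j) *
            (antipode (R := k) (r.left i) * r.right i) * r'.right j := by
        intro i
        simp only [z, m, LinearMap.coe_comp, Function.comp_apply, LinearEquiv.coe_coe,
          TensorProduct.comm_tmul, TensorProduct.map_tmul, LinearMap.mul'_apply]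
        rw [mul_assoc, mul_assoc, mul_assoc]
      rw [Finset.sum_congr rfl fun i _ => this i, ← Finset.sum_mul, ← Finset.mul_sum,
        HopfAlgebra.sum_antipode_mul_eq_algebraMap_counit r]
    rw [Finset.sum_comm, Finset.sum_congr rfl fun j _ => inner j]
    have : ∀ j, antipode (R := k) (r'.left j) * algebraMap k H (Coalgebra.counit (R := k) a)
        * r'.right j = algebraMap k H (Coalgebra.counit (R := k) a) *
          (antipode (R := k) (r'.left j) * r'.right j) := by
      intro j
      rw [← Algebra.commutes, mul_assoc]
    rw [Finset.sum_congr rfl fun j _ => this j, ← Finset.mul_sum,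
      HopfAlgebra.sum_antipode_mul_eq_algebraMap_counit r']
    rw [show cunit (k := k) (X := H) (a ⊗ₜ[k] b)
        = algebraMap k H (Coalgebra.counit (R := k) (a ⊗ₜ[k] b)) from rfl, counit_tmul']
    rw [map_mul]
  have := conv_inv_unique h1 h2
  have := congrFun (congrArg DFunLike.coe this) (g ⊗ₜ[k] g')
  simpa [y, z, m, LinearMap.mul'_apply] using this

end Anti

section Main

/-- `A` is a unital right `H`-module algebra via the bilinear action `act` (written `a ◁ g`):
`a ◁ 1 = a`, `a ◁ (g g') = (a ◁ g) ◁ g'`, `(a a') ◁ g = (a ◁ g₍₁₎)(a' ◁ g₍₂₎)`,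
and `1 ◁ g = ε(g) 1`. -/
structure RightModuleAlgebra (k : Type) [Field k] (H A : Type) [Ring H] [Ring A]
    [HopfAlgebra k H] [Algebra k A] (act : A →ₗ[k] H →ₗ[k] A) : Prop where
  act_one : ∀ a : A, act a 1 = a
  act_mul : ∀ (a : A) (g g' : H), act a (g * g') = act (act a g) g'
  mul_act : ∀ (a a' : A) (g : H), act (a * a') g =
    LinearMap.mul' k A (TensorProduct.map (act a) (act a') (Coalgebra.comul g))
  one_act : ∀ g : H, act (1 : A) g = (Coalgebra.counit (R := k) g) • (1 : A)

/-- The cross-product (smash product) algebra `A >⋊ H`, realized as an ambient algebra `B`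
containing `H` and `A` via `ιH`, `ιA`, with the straightening relation
`a g = g₍₁₎ (a ◁ g₍₂₎)` and with `g ⊗ a ↦ ιH g * ιA a` a linear bijection `H ⊗ A ≃ B`. -/
structure SmashProduct (k : Type) [Field k] (H A B : Type) [Ring H] [Ring A] [Ring B]
    [HopfAlgebra k H] [Algebra k A] [Algebra k B]
    (act : A →ₗ[k] H →ₗ[k] A) : Type where
  ιH : H →ₐ[k] B
  ιA : A →ₐ[k] B
  straighten : ∀ (a : A) (g : H), ιA a * ιH g =
    LinearMap.mul' k B (TensorProduct.map ιH.toLinearMap (ιA.toLinearMap ∘ₗ act a)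
      (Coalgebra.comul g))
  mulMap_bij : Function.Bijective fun x : H ⊗[k] A =>
    LinearMap.mul' k B (TensorProduct.map ιH.toLinearMap ιA.toLinearMap x)

variable {k : Type} [Field k] {H A B : Type} [Ring H] [Ring A] [Ring B]
  [HopfAlgebra k H] [Algebra k A] [Algebra k B] {act : A →ₗ[k] H →ₗ[k] A}

/-- The decoupling map `ζ̃(g) = g₍₁₎ φ̃(S g₍₂₎)`, valued in `A >⋊ H`. -/
noncomputable def zeta (S : SmashProduct k H A B act) (φ : B →ₐ[k] A) : H →ₗ[k] B :=
  (LinearMap.mul' k B) ∘ₗ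
    (TensorProduct.map S.ιH.toLinearMap
      (S.ιA.toLinearMap ∘ₗ φ.toLinearMap ∘ₗ S.ιH.toLinearMap ∘ₗ
        (HopfAlgebra.antipode (R := k) (A := H)))) ∘ₗ Coalgebra.comul



open HopfAlgebra Coalgebra

lemma straighten_repr (S : SmashProduct k H A B act) (a : A) (h : H) (r : Coalgebra.Repr k h (H × H)) :
    S.ιA a * S.ιH h = ∑ i ∈ r.index, S.ιH (r.left i) * S.ιA (act a (r.right i)) := by
  rw [S.straighten a h, ← r.eq]
  simp [map_sum, LinearMap.mul'_apply]

lemma L1 (S : SmashProduct k H A B act) (φ : B →ₐ[k] A) (hφ : ∀ a : A, φ (S.ιA a) = a) (a : A) :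
    conv (φ.comp S.ιH).toLinearMap (act a) =
      LinearMap.mulLeft k a ∘ₗ (φ.comp S.ιH).toLinearMap := by
  ext h
  set r := Coalgebra.Repr.arbitrary k h
  rw [conv_repr _ _ h r]
  have hs := congrArg φ (straighten_repr S a h r)
  simp only [map_mul, map_sum, hφ] at hs
  simp only [LinearMap.comp_apply, AlgHom.toLinearMap_apply, AlgHom.comp_apply,
    LinearMap.mulLeft_apply]
  exact hs.symm

lemma conv_FS_F (S : SmashProduct k H A B act) (φ : B →ₐ[k] A) :
    conv ((φ.comp S.ιH).toLinearMap ∘ₗ antipode (R := k)) (φ.comp S.ιH).toLinearMap = cunit := by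
  ext h
  set r := Coalgebra.Repr.arbitrary k h
  rw [conv_repr _ _ h r]
  calc ∑ i ∈ r.index, ((φ.comp S.ιH).toLinearMap ∘ₗ antipode (R := k)) (r.left i) *
        (φ.comp S.ιH).toLinearMap (r.right i)
      = ∑ i ∈ r.index, (φ.comp S.ιH) (antipode (R := k) (r.left i) * r.right i) := by
        refine Finset.sum_congr rfl fun i _ => ?_
        simp [map_mul]
    _ = (φ.comp S.ιH) (∑ i ∈ r.index, antipode (R := k) (r.left i) * r.right i) :=
        (map_sum _ _ _).symm
    _ = (φ.comp S.ιH) (algebraMap k H (Coalgebra.counit h)) := by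
        rw [HopfAlgebra.sum_antipode_mul_eq_algebraMap_counit r]
    _ = cunit h := by rw [AlgHom.commutes, cunit_apply]

lemma conv_F_FS (S : SmashProduct k H A B act) (φ : B →ₐ[k] A) :
    conv (φ.comp S.ιH).toLinearMap ((φ.comp S.ιH).toLinearMap ∘ₗ antipode (R := k)) = cunit := by
  ext h
  set r := Coalgebra.Repr.arbitrary k h
  rw [conv_repr _ _ h r]
  calc ∑ i ∈ r.index, (φ.comp S.ιH).toLinearMap (r.left i) *
        ((φ.comp S.ιH).toLinearMap ∘ₗ antipode (R := k)) (r.right i)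
      = ∑ i ∈ r.index, (φ.comp S.ιH) (r.left i * antipode (R := k) (r.right i)) := by
        refine Finset.sum_congr rfl fun i _ => ?_
        simp [map_mul]
    _ = (φ.comp S.ιH) (∑ i ∈ r.index, r.left i * antipode (R := k) (r.right i)) :=
        (map_sum _ _ _).symm
    _ = (φ.comp S.ιH) (algebraMap k H (Coalgebra.counit h)) := by
        rw [HopfAlgebra.sum_mul_antipode_eq_algebraMap_counit r]
    _ = cunit h := by rw [AlgHom.commutes, cunit_apply]

lemma L2map (S : SmashProduct k H A B act) (φ : B →ₐ[k] A) (hφ : ∀ a : A, φ (S.ιA a) = a)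
    (a : A) :
    conv (act a) ((φ.comp S.ιH).toLinearMap ∘ₗ antipode (R := k)) =
      LinearMap.mulRight k a ∘ₗ ((φ.comp S.ιH).toLinearMap ∘ₗ antipode (R := k)) := by
  have hcomm : LinearMap.mulLeft k a ∘ₗ (cunit : H →ₗ[k] A) =
      LinearMap.mulRight k a ∘ₗ (cunit : H →ₗ[k] A) := by
    ext h
    simp only [LinearMap.comp_apply, cunit_apply, LinearMap.mulLeft_apply,
      LinearMap.mulRight_apply]
    exact (Algebra.commutes _ _).symm
  have e1 : conv (φ.comp S.ιH).toLinearMap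
      (conv (act a) ((φ.comp S.ιH).toLinearMap ∘ₗ antipode (R := k)))
      = LinearMap.mulLeft k a ∘ₗ (cunit : H →ₗ[k] A) := by
    rw [← conv_assoc, L1 S φ hφ a, conv_mulLeft, conv_F_FS S φ]
  calc conv (act a) ((φ.comp S.ιH).toLinearMap ∘ₗ antipode (R := k))
      = conv cunit (conv (act a) ((φ.comp S.ιH).toLinearMap ∘ₗ antipode (R := k))) :=
        (conv_cunit_left _).symm
    _ = conv (conv ((φ.comp S.ιH).toLinearMap ∘ₗ antipode (R := k)) (φ.comp S.ιH).toLinearMap)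
          (conv (act a) ((φ.comp S.ιH).toLinearMap ∘ₗ antipode (R := k))) := by
        rw [conv_FS_F S φ]
    _ = conv ((φ.comp S.ιH).toLinearMap ∘ₗ antipode (R := k))
          (conv (φ.comp S.ιH).toLinearMap
            (conv (act a) ((φ.comp S.ιH).toLinearMap ∘ₗ antipode (R := k)))) :=
        conv_assoc _ _ _
    _ = conv ((φ.comp S.ιH).toLinearMap ∘ₗ antipode (R := k))
          (LinearMap.mulRight k a ∘ₗ (cunit : H →ₗ[k] A)) := by rw [e1, hcomm]
    _ = LinearMap.mulRight k a ∘ₗ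
          conv ((φ.comp S.ιH).toLinearMap ∘ₗ antipode (R := k)) (cunit : H →ₗ[k] A) :=
        conv_mulRight _ _ _
    _ = LinearMap.mulRight k a ∘ₗ ((φ.comp S.ιH).toLinearMap ∘ₗ antipode (R := k)) := by
        rw [conv_cunit_right]

lemma L2 (S : SmashProduct k H A B act) (φ : B →ₐ[k] A) (hφ : ∀ a : A, φ (S.ιA a) = a)
    (a : A) (h : H) (r : Coalgebra.Repr k h (H × H)) :
    ∑ i ∈ r.index, act a (r.left i) * φ (S.ιH (antipode (R := k) (r.right i)))
      = φ (S.ιH (antipode (R := k) h)) * a := by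
  have := congrFun (congrArg DFunLike.coe (L2map S φ hφ a)) h
  rw [conv_repr _ _ h r] at this
  simpa using this

lemma zeta_repr (S : SmashProduct k H A B act) (φ : B →ₐ[k] A) (g : H)
    (r : Coalgebra.Repr k g (H × H)) :
    zeta S φ g = ∑ i ∈ r.index,
      S.ιH (r.left i) * S.ιA (φ (S.ιH (antipode (R := k) (r.right i)))) := by
  rw [zeta, LinearMap.comp_apply, LinearMap.comp_apply, ← r.eq]
  simp [map_sum, LinearMap.mul'_apply]

lemma L3 (S : SmashProduct k H A B act) (φ : B →ₐ[k] A) (hφ : ∀ a : A, φ (S.ιA a) = a)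
    (a : A) (h : H) : S.ιA a * zeta S φ h = zeta S φ h * S.ιA a := by
  set r := Coalgebra.Repr.arbitrary k h
  set a₁ : (i : H × H) → Coalgebra.Repr k (r.left i) (H × H) := fun i => Coalgebra.Repr.arbitrary k _
  set a₂ : (i : H × H) → Coalgebra.Repr k (r.right i) (H × H) := fun i => Coalgebra.Repr.arbitrary k _
  have key := Coalgebra.sum_tmul_tmul_eq r a₁ a₂
  set T : H ⊗[k] (H ⊗[k] H) →ₗ[k] B := LinearMap.mul' k B ∘ₗ
    TensorProduct.map S.ιH.toLinearMap (S.ιA.toLinearMap ∘ₗ LinearMap.mul' k A ∘ₗ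
      TensorProduct.map (act a) ((φ.comp S.ιH).toLinearMap ∘ₗ antipode (R := k))) with hTdef
  have hT : ∀ x y z : H, T (x ⊗ₜ[k] (y ⊗ₜ[k] z)) =
      S.ιH x * S.ιA (act a y * φ (S.ιH (antipode (R := k) z))) := by
    intro x y z
    simp [hTdef, LinearMap.mul'_apply]
  have key2 := congrArg T key
  simp only [map_sum, hT] at key2
  calc S.ιA a * zeta S φ h
      = ∑ i ∈ r.index, (S.ιA a * S.ιH (r.left i)) *
          S.ιA (φ (S.ιH (antipode (R := k) (r.right i)))) := by
        rw [zeta_repr S φ h r, Finset.mul_sum]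
        exact Finset.sum_congr rfl fun i _ => (mul_assoc _ _ _).symm
    _ = ∑ i ∈ r.index, ∑ j ∈ (a₁ i).index, S.ιH ((a₁ i).left j) *
          S.ιA (act a ((a₁ i).right j) * φ (S.ιH (antipode (R := k) (r.right i)))) := by
        refine Finset.sum_congr rfl fun i _ => ?_
        rw [straighten_repr S a _ (a₁ i), Finset.sum_mul]
        refine Finset.sum_congr rfl fun j _ => ?_
        rw [mul_assoc, ← map_mul S.ιA]
    _ = ∑ i ∈ r.index, ∑ j ∈ (a₂ i).index, S.ιH (r.left i) *
          S.ιA (act a ((a₂ i).left j) * φ (S.ιH (antipode (R := k) ((a₂ i).right j)))) := key2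
    _ = ∑ i ∈ r.index, S.ιH (r.left i) *
          S.ιA (φ (S.ιH (antipode (R := k) (r.right i))) * a) := by
        refine Finset.sum_congr rfl fun i _ => ?_
        rw [← Finset.mul_sum, ← map_sum, L2 S φ hφ a _ (a₂ i)]
    _ = zeta S φ h * S.ιA a := by
        rw [zeta_repr S φ h r, Finset.sum_mul]
        refine Finset.sum_congr rfl fun i _ => ?_
        rw [map_mul S.ιA, mul_assoc]


/-- `ζ̃` is a (unital) algebra homomorphism. -/
theorem zeta_algHom
    (hMA : RightModuleAlgebra k H A act)
    (S : SmashProduct k H A B act) (φ : B →ₐ[k] A)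
    (hφ : ∀ a : A, φ (S.ιA a) = a) :
    zeta S φ (1 : H) = 1 ∧
    ∀ g g' : H, zeta S φ (g * g') = zeta S φ g * zeta S φ g' := by
  constructor
  · have hr : Coalgebra.comul (R := k) (1 : H) = (1 : H) ⊗ₜ[k] (1 : H) := by
      rw [Bialgebra.comul_one, Algebra.TensorProduct.one_def]
    rw [zeta, LinearMap.comp_apply, LinearMap.comp_apply, hr]
    simp [LinearMap.mul'_apply, antipode_one']
  · intro g g'
    set r := Coalgebra.Repr.arbitrary k g
    set r' := Coalgebra.Repr.arbitrary k g'
    have hcm : ∑ i ∈ r.index, ∑ j ∈ r'.index,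
        (r.left i * r'.left j) ⊗ₜ[k] (r.right i * r'.right j)
          = Coalgebra.comul (R := k) (g * g') := by
      rw [Bialgebra.comul_mul, ← r.eq, ← r'.eq, Finset.sum_mul_sum]
      simp [Algebra.TensorProduct.tmul_mul_tmul]
    have lhs : zeta S φ (g * g') = ∑ i ∈ r.index, ∑ j ∈ r'.index,
        S.ιH (r.left i * r'.left j) *
          S.ιA (φ (S.ιH (antipode (R := k) (r.right i * r'.right j)))) := by
      rw [zeta, LinearMap.comp_apply, LinearMap.comp_apply, ← hcm]
      simp [map_sum, LinearMap.mul'_apply]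
    rw [lhs, zeta_repr S φ g r, Finset.sum_mul]
    refine Finset.sum_congr rfl fun i _ => ?_
    rw [mul_assoc, L3 S φ hφ _ g', zeta_repr S φ g' r', Finset.sum_mul, Finset.mul_sum]
    refine Finset.sum_congr rfl fun j _ => ?_
    rw [antipode_anti_mul]
    simp only [map_mul, mul_assoc]
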